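/- Let f be a non-constant entire function, z ∈ ℂ, and R > 0 such that f(w) ≠ f(z) for all w with |w| = R, and such that every solution w of f(w) = f(z) with |w| < R is simple, i.e. f'(w) ≠ 0. Then the set of such solutions is finite and ∮_{|w|=R} (f(w) − f(z))^{−1} dw = 2πi · ∑_{w : f(w) = f(z), |w| < R} (f'(w))^{−1}. -/

import Mathlib

open Metric Set

private lemma key_induction (R : ℝ) (hR : 0 < R) (s : Finset ℂ) :
    ∀ (g φ : ℂ → ℂ), Differentiable ℂ g → Differentiable ℂ φ →
      (↑s ⊆ ball (0:ℂ) R) →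
      (∀ w ∈ closedBall (0:ℂ) R, (g w = 0 ↔ w ∈ s)) →
      (∀ w ∈ s, deriv g w ≠ 0) →
      (∮ x in C(0, R), φ x / g x) =
        2 * Real.pi * Complex.I * ∑ w ∈ s, φ w / deriv g w := by
  induction s using Finset.induction with
  | empty =>
    intro g φ hg hφ _ hzero _
    have hne : ∀ x ∈ closedBall (0:ℂ) R, g x ≠ 0 := fun x hx h => by
      simpa using (hzero x hx).1 h
    have h0 : (∮ x in C(0, R), φ x / g x) = 0 := by
      refine Complex.circleIntegral_eq_zero_of_differentiable_on_off_countable hR.le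
        Set.countable_empty
        ((hφ.continuous.continuousOn).div (hg.continuous.continuousOn) hne) ?_
      intro x hx
      exact (hφ x).div (hg x) (hne x (ball_subset_closedBall hx.1))
    simp [h0]
  | @insert a t ha ih =>
    intro g φ hg hφ hsub hzero hsimp
    have haR : a ∈ ball (0:ℂ) R := hsub (by simp)
    have hga : g a = 0 :=
      (hzero a (ball_subset_closedBall haR)).2 (Finset.mem_insert_self a t)
    set k : ℂ → ℂ := dslope g a with hk_def
    have hk : Differentiable ℂ k := by
      have := (Complex.differentiableOn_dslope
        (Filter.univ_mem : (univ : Set ℂ) ∈ nhds a)).2 hg.differentiableOn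
      rw [← differentiableOn_univ]; exact this
    have hgk : ∀ x, g x = (x - a) * k x := fun x => by
      have h := sub_smul_dslope g a x
      rw [hga, sub_zero, smul_eq_mul] at h
      exact h.symm
    have hka : k a = deriv g a := dslope_same g a
    have hka0 : k a ≠ 0 := by
      rw [hka]; exact hsimp a (Finset.mem_insert_self a t)
    have hder : ∀ x, deriv g x = k x + (x - a) * deriv k x := fun x => by
      have hfun : g = fun y => (y - a) * k y := funext hgk
      rw [hfun, deriv_fun_mul ((differentiableAt_fun_id.sub_const a)) (hk x)]
      simp
    -- zeros of k in closed ball are exactly t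
    have hkzero : ∀ w ∈ closedBall (0:ℂ) R, (k w = 0 ↔ w ∈ t) := by
      intro w hw
      rcases eq_or_ne w a with rfl | hwa
      · exact ⟨fun h => absurd h hka0, fun h => absurd h ha⟩
      · have hsub0 : w - a ≠ 0 := sub_ne_zero.2 hwa
        constructor
        · intro h
          have hgw : g w = 0 := by rw [hgk w, h, mul_zero]
          have := (hzero w hw).1 hgw
          rcases Finset.mem_insert.1 this with h' | h'
          · exact absurd h' hwa
          · exact h'
        · intro h
          have hgw : g w = 0 :=
            (hzero w hw).2 (Finset.mem_insert_of_mem h)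
          rw [hgk w] at hgw
          exact (mul_eq_zero.1 hgw).resolve_left hsub0
    have htsub : ↑t ⊆ ball (0:ℂ) R :=
      fun w hw => hsub (Finset.mem_coe.2 (Finset.mem_insert_of_mem hw))
    have hkderiv : ∀ w ∈ t, deriv g w = (w - a) * deriv k w := by
      intro w hw
      have hkw : k w = 0 :=
        (hkzero w (ball_subset_closedBall (htsub hw))).2 hw
      rw [hder w, hkw, zero_add]
    have htsimp : ∀ w ∈ t, deriv k w ≠ 0 := by
      intro w hw h
      have := hsimp w (Finset.mem_insert_of_mem hw)
      rw [hkderiv w hw, h, mul_zero] at this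
      exact this rfl
    -- N and M
    set N : ℂ → ℂ := fun x => φ x * k a - φ a * k x with hN_def
    have hN : Differentiable ℂ N := (hφ.mul_const _).sub (hk.const_mul _)
    have hNa : N a = 0 := by simp [hN_def]
    set M : ℂ → ℂ := dslope N a with hM_def
    have hM : Differentiable ℂ M := by
      have := (Complex.differentiableOn_dslope
        (Filter.univ_mem : (univ : Set ℂ) ∈ nhds a)).2 hN.differentiableOn
      rw [← differentiableOn_univ]; exact this
    have hNM : ∀ x, N x = (x - a) * M x := fun x => by
      have h := sub_smul_dslope N a x
      rw [hNa, sub_zero, smul_eq_mul] at h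
      exact h.symm
    -- facts on the sphere
    have hsphere : ∀ x ∈ sphere (0:ℂ) R, g x ≠ 0 ∧ x ≠ a ∧ k x ≠ 0 := by
      intro x hx
      have hxcb : x ∈ closedBall (0:ℂ) R := sphere_subset_closedBall hx
      have hxnb : x ∉ ball (0:ℂ) R := by
        simp only [mem_sphere_iff_norm, sub_zero] at hx
        simp [mem_ball, dist_zero_right, hx]
      have hgx : g x ≠ 0 := by
        intro h
        exact hxnb (hsub (Finset.mem_coe.2 ((hzero x hxcb).1 h)))
      have hxa : x ≠ a := fun h => hgx (h ▸ hga)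
      have hkx : k x ≠ 0 := by
        intro h
        apply hgx
        rw [hgk x, h, mul_zero]
      exact ⟨hgx, hxa, hkx⟩
    -- the key pointwise identity on the sphere
    have hEq : EqOn (fun x => φ x / g x)
        (fun x => (φ a / k a) * (x - a)⁻¹ + (k a)⁻¹ * (M x / k x))
        (sphere (0:ℂ) R) := by
      intro x hx
      obtain ⟨hgx, hxa, hkx⟩ := hsphere x hx
      have hxa0 : x - a ≠ 0 := sub_ne_zero.2 hxa
      have hMx : M x = (φ x * k a - φ a * k x) / (x - a) := by
        rw [eq_div_iff hxa0]
        have h := hNM x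
        simp only [hN_def] at h
        linear_combination -h
      simp only
      rw [hgk x, hMx]
      field_simp
      ring
    -- integrability facts
    have hInt1 : CircleIntegrable (fun x => φ x / g x) 0 R := by
      apply ContinuousOn.circleIntegrable hR.le
      exact (hφ.continuous.continuousOn).div (hg.continuous.continuousOn)
        (fun x hx => (hsphere x hx).1)
    have hInt2 : CircleIntegrable (fun x => (φ a / k a) * (x - a)⁻¹) 0 R := by
      apply ContinuousOn.circleIntegrable hR.le
      exact continuousOn_const.mul (((continuous_id.sub continuous_const).continuousOn).inv₀
        (fun x hx => sub_ne_zero.2 (hsphere x hx).2.1))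
    -- main computation
    have hsplit : (k a)⁻¹ * (∮ x in C(0, R), M x / k x) =
        (∮ x in C(0, R), φ x / g x) - (φ a / k a) * (2 * Real.pi * Complex.I) := by
      have h1 : (k a)⁻¹ * (∮ x in C(0, R), M x / k x) =
          ∮ x in C(0, R), (k a)⁻¹ • (M x / k x) := by
        rw [circleIntegral.integral_smul, smul_eq_mul]
      rw [h1]
      have h2 : (∮ x in C(0, R), (k a)⁻¹ • (M x / k x)) =
          ∮ x in C(0, R), (φ x / g x - (φ a / k a) * (x - a)⁻¹) := by
        apply circleIntegral.integral_congr hR.le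
        intro x hx
        have := hEq hx
        simp only at this ⊢
        rw [smul_eq_mul]
        rw [this]
        ring
      rw [h2, circleIntegral.integral_sub hInt1 hInt2]
      congr 1
      have h3 : (∮ x in C(0, R), (φ a / k a) * (x - a)⁻¹) =
          (φ a / k a) • ∮ x in C(0, R), (x - a)⁻¹ := by
        rw [← circleIntegral.integral_smul]; simp [smul_eq_mul]
      rw [h3, circleIntegral.integral_sub_inv_of_mem_ball haR, smul_eq_mul]
    have hIH : (∮ x in C(0, R), M x / k x) =
        2 * Real.pi * Complex.I * ∑ w ∈ t, M w / deriv k w :=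
      ih k M hk hM htsub hkzero htsimp
    -- evaluate the sum terms
    have hterm : ∀ w ∈ t, (k a)⁻¹ * (M w / deriv k w) = φ w / deriv g w := by
      intro w hw
      have hwb : w ∈ closedBall (0:ℂ) R := ball_subset_closedBall (htsub hw)
      have hkw : k w = 0 := (hkzero w hwb).2 hw
      have hwa : w ≠ a := fun h => ha (h ▸ hw)
      have hwa0 : w - a ≠ 0 := sub_ne_zero.2 hwa
      have hdk : deriv k w ≠ 0 := htsimp w hw
      have hdg : deriv g w = (w - a) * deriv k w := hkderiv w hw
      have hMw : M w = φ w * k a / (w - a) := by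
        rw [eq_div_iff hwa0]
        have h := hNM w
        simp only [hN_def, hkw, mul_zero, sub_zero] at h
        linear_combination -h
      rw [hMw, hdg]
      field_simp
    rw [Finset.sum_insert ha]
    have hsum : ∑ w ∈ t, φ w / deriv g w =
        ∑ w ∈ t, (k a)⁻¹ * (M w / deriv k w) :=
      Finset.sum_congr rfl fun w hw => (hterm w hw).symm
    calc (∮ x in C(0, R), φ x / g x)
        = (φ a / k a) * (2 * Real.pi * Complex.I) +
            (k a)⁻¹ * (∮ x in C(0, R), M x / k x) := by linear_combination -hsplit
      _ = 2 * Real.pi * Complex.I *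
            (φ a / deriv g a + ∑ w ∈ t, φ w / deriv g w) := by
          rw [hIH, hsum, ← hka, mul_add]
          congr 1
          · ring
          · simp only [Finset.mul_sum]
            exact Finset.sum_congr rfl fun w _ => by ring

theorem circle_integral_eq_sum_inv_deriv (f : ℂ → ℂ) (hf : Differentiable ℂ f)
    (hnc : ¬∃ c : ℂ, ∀ w : ℂ, f w = c) (z : ℂ) (R : ℝ) (hR : 0 < R)
    (hcirc : ∀ w : ℂ, ‖w‖ = R → f w ≠ f z)
    (hsimple : ∀ w : ℂ, f w = f z → ‖w‖ < R → deriv f w ≠ 0) :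
    {w : ℂ | f w = f z ∧ ‖w‖ < R}.Finite ∧
    (∮ w in C(0, R), (f w - f z)⁻¹) =
      2 * Real.pi * Complex.I *
        ∑' w : {w : ℂ // f w = f z ∧ ‖w‖ < R}, (deriv f (w : ℂ))⁻¹ := by
  classical
  set S : Set ℂ := {w : ℂ | f w = f z ∧ ‖w‖ < R} with hS_def
  have hsubS : S ⊆ closedBall (0:ℂ) R := fun w hw => by
    simp only [mem_closedBall, dist_zero_right]
    exact hw.2.le
  have hfin : S.Finite := by
    by_contra hinf
    obtain ⟨x, hxK, hacc⟩ :=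
      Set.Infinite.exists_accPt_of_subset_isCompact hinf (isCompact_closedBall 0 R) hsubS
    have hfreq : ∃ᶠ y in nhdsWithin x {x}ᶜ, f y - f z = 0 := by
      rw [frequently_nhdsWithin_iff]
      exact (accPt_iff_frequently.1 hacc).mono
        (fun y hy => ⟨sub_eq_zero.2 hy.2.1, hy.1⟩)
    have hana : AnalyticOnNhd ℂ (fun w => f w - f z) univ :=
      Complex.analyticOnNhd_univ_iff_differentiable.2 (hf.sub_const _)
    have hzero := hana.eqOn_zero_of_preconnected_of_frequently_eq_zero
      isPreconnected_univ (mem_univ x) hfreq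
    have habs : ‖(R:ℂ)‖ = R := by
      simp [abs_of_pos hR]
    have := hzero (mem_univ (R:ℂ))
    simp only [Pi.zero_apply] at this
    exact hcirc (R:ℂ) habs (sub_eq_zero.1 this)
  refine ⟨hfin, ?_⟩
  set s : Finset ℂ := hfin.toFinset with hs_def
  have hmem : ∀ w : ℂ, w ∈ s ↔ f w = f z ∧ ‖w‖ < R := fun w => by
    rw [hs_def, Set.Finite.mem_toFinset]; exact Iff.rfl
  have hd : ∀ w : ℂ, deriv (fun w => f w - f z) w = deriv f w := fun w => by
    simp [deriv_sub_const]
  have hkey := key_induction R hR s (fun w => f w - f z) (fun _ => 1)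
    (hf.sub_const _) (differentiable_const 1)
    (fun w hw => by
      have := ((hmem w).1 (Finset.mem_coe.1 hw)).2
      simp only [mem_ball, dist_zero_right]
      exact this)
    (fun w hw => by
      rw [hmem w]
      constructor
      · intro h
        have hfw : f w = f z := sub_eq_zero.1 h
        refine ⟨hfw, ?_⟩
        rcases lt_or_eq_of_le (by simpa [mem_closedBall, dist_zero_right] using hw : ‖w‖ ≤ R) with h' | h'
        · exact h'
        · exact absurd hfw (hcirc w h')
      · intro h
        exact sub_eq_zero.2 h.1)
    (fun w hw => by
      rw [hd w]
      have h := (hmem w).1 hw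
      exact hsimple w h.1 h.2)
  have h1 : (∮ w in C(0, R), (f w - f z)⁻¹) = ∮ w in C(0, R), 1 / (f w - f z) := by
    simp [one_div]
  rw [h1, hkey]
  congr 1
  have h2 : ∀ w ∈ s, (1:ℂ) / deriv (fun w => f w - f z) w = (deriv f w)⁻¹ := fun w hw => by
    rw [hd w, one_div]
  rw [Finset.sum_congr rfl h2]
  haveI : Fintype {w : ℂ // f w = f z ∧ ‖w‖ < R} := hfin.fintype
  rw [tsum_fintype]
  exact Finset.sum_subtype s hmem (fun w => (deriv f w)⁻¹)
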